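/- For 1 ≤ k ≤ n−1, the groups Γ^k and Γ^{n−k} coincide: an invertible element T with T ∈ Z^×(C^{×(0)}∪C^{×(1)}) satisfies T C^k T^{-1} ⊆ C^k if and only if T C^{n−k} T^{-1} ⊆ C^{n−k}. -/

import Mathlib

open CliffordAlgebra

noncomputable section

variable {n : ℕ} (Q : QuadraticForm ℝ (Fin n → ℝ))

/-- The standard generators `e_a` of the Clifford algebra. -/
def egen (a : Fin n) : CliffordAlgebra Q := ι Q (Pi.single a 1)

/-- The ordered product of generators indexed by a finite set. -/
def eProd (s : Finset (Fin n)) : CliffordAlgebra Q :=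
  ((s.sort (· ≤ ·)).map (egen Q)).prod

/-- The grade-`k` subspace `C^k`, spanned by the products of `k` distinct generators. -/
def gradeSubmodule (k : ℕ) : Submodule ℝ (CliffordAlgebra Q) :=
  Submodule.span ℝ {x | ∃ s : Finset (Fin n), s.card = k ∧ x = eProd Q s}

/-- The set `Z^× (C^{×(0)} ∪ C^{×(1)})` : invertible central elements times
invertible even or odd elements. -/
def Pset : Set (CliffordAlgebra Q) :=
  {T | ∃ W T₀ : CliffordAlgebra Q,
    W ∈ Subalgebra.center ℝ (CliffordAlgebra Q) ∧ IsUnit W ∧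
    (T₀ ∈ evenOdd Q 0 ∨ T₀ ∈ evenOdd Q 1) ∧ IsUnit T₀ ∧ T = W * T₀}

/-- `Q` is diagonal with entries `±1` in the standard basis (an orthonormal-type basis,
expressing nondegeneracy of `Q`). -/
def DiagQ : Prop :=
  (∀ a, Q (Pi.single a 1) = 1 ∨ Q (Pi.single a 1) = -1) ∧
  (∀ a b : Fin n, a ≠ b → QuadraticMap.polar Q (Pi.single a 1) (Pi.single b 1) = 0)

/-- list product of generators -/
def eListProd (l : List (Fin n)) : CliffordAlgebra Q := (l.map (egen Q)).prod

@[simp] lemma eListProd_nil : eListProd Q ([] : List (Fin n)) = 1 := rfl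

@[simp] lemma eListProd_cons (a : Fin n) (l : List (Fin n)) :
    eListProd Q (a :: l) = egen Q a * eListProd Q l := by
  simp [eListProd]

lemma eProd_eq_sort (s : Finset (Fin n)) : eProd Q s = eListProd Q (s.sort (· ≤ ·)) := rfl

lemma egen_sq (a : Fin n) :
    egen Q a * egen Q a = algebraMap ℝ _ (Q (Pi.single a 1)) :=
  ι_sq_scalar Q _

lemma egen_anticomm (hQ : DiagQ Q) {a b : Fin n} (h : a ≠ b) :
    egen Q a * egen Q b = - (egen Q b * egen Q a) := by
  have h2 := ι_mul_ι_add_swap (Q := Q) (Pi.single a 1) (Pi.single b 1)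
  rw [hQ.2 a b h, map_zero] at h2
  exact eq_neg_of_add_eq_zero_left h2

/-- moving a generator through a list product -/
lemma egen_pass (hQ : DiagQ Q) (a : Fin n) (l : List (Fin n)) :
    egen Q a * eListProd Q l
      = ((-1 : ℝ) ^ ((l.filter (· ≠ a)).length)) • (eListProd Q l * egen Q a) := by
  induction l with
  | nil => simp
  | cons b l ih =>
    by_cases hb : b = a
    · subst hb
      have hf : (b :: l).filter (· ≠ b) = l.filter (· ≠ b) := by
        simp [List.filter_cons]
      rw [hf, eListProd_cons]
      calc egen Q b * (egen Q b * eListProd Q l)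
          = egen Q b * (((-1 : ℝ) ^ ((l.filter (· ≠ b)).length))
              • (eListProd Q l * egen Q b)) := by rw [ih]
        _ = ((-1 : ℝ) ^ ((l.filter (· ≠ b)).length))
              • (egen Q b * (eListProd Q l * egen Q b)) := mul_smul_comm _ _ _
        _ = ((-1 : ℝ) ^ ((l.filter (· ≠ b)).length))
              • (egen Q b * eListProd Q l * egen Q b) := by rw [mul_assoc]
    · have hab : a ≠ b := fun h => hb h.symm
      have hf : (b :: l).filter (· ≠ a) = b :: l.filter (· ≠ a) := by
        simp [List.filter_cons, hb]
      rw [hf, eListProd_cons]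
      calc egen Q a * (egen Q b * eListProd Q l)
          = (egen Q a * egen Q b) * eListProd Q l := by rw [mul_assoc]
        _ = - (egen Q b * (egen Q a * eListProd Q l)) := by
              rw [egen_anticomm Q hQ hab]; rw [neg_mul, mul_assoc]
        _ = - (egen Q b * (((-1 : ℝ) ^ ((l.filter (· ≠ a)).length))
              • (eListProd Q l * egen Q a))) := by rw [ih]
        _ = ((-1 : ℝ) ^ ((b :: l.filter (· ≠ a)).length))
              • (egen Q b * eListProd Q l * egen Q a) := by
              rw [mul_smul_comm, List.length_cons, pow_succ, mul_comm,
                ← smul_smul, neg_one_smul,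
                mul_assoc (egen Q b) (eListProd Q l) (egen Q a)]

lemma eListProd_perm (hQ : DiagQ Q) {l l' : List (Fin n)} (h : l.Perm l') :
    l.Nodup → ∃ c : ℝ, c ≠ 0 ∧ eListProd Q l = c • eListProd Q l' := by
  induction h with
  | nil => exact fun _ => ⟨1, one_ne_zero, by simp⟩
  | cons a h ih =>
      intro hl
      obtain ⟨c, hc, he⟩ := ih (List.Nodup.of_cons hl)
      exact ⟨c, hc, by rw [eListProd_cons, he, mul_smul_comm, eListProd_cons]⟩
  | swap a b l =>
      intro hl
      have hba : b ≠ a := by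
        have := (List.nodup_cons.mp hl).1
        simp only [List.mem_cons] at this
        exact fun h => this (Or.inl h)
      refine ⟨-1, by norm_num, ?_⟩
      rw [eListProd_cons, eListProd_cons, eListProd_cons, eListProd_cons,
        ← mul_assoc, egen_anticomm Q hQ hba, neg_mul, mul_assoc, neg_one_smul]
  | trans h₁ h₂ ih₁ ih₂ =>
      intro hl
      obtain ⟨c, hc, he⟩ := ih₁ hl
      obtain ⟨c', hc', he'⟩ := ih₂ ((h₁.nodup_iff).mp hl)
      exact ⟨c * c', mul_ne_zero hc hc', by rw [he, he', smul_smul]⟩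

lemma symmDiff_singleton_finset (a : Fin n) (t : Finset (Fin n)) :
    symmDiff {a} t = if a ∈ t then t.erase a else insert a t := by
  split_ifs with h
  · ext b
    by_cases hb : b = a
    · subst hb; simp [Finset.mem_symmDiff, h]
    · simp [Finset.mem_symmDiff, hb]
  · ext b
    by_cases hb : b = a
    · subst hb; simp [Finset.mem_symmDiff, h]
    · simp [Finset.mem_symmDiff, hb]

lemma egen_mul_eProd (hQ : DiagQ Q) (a : Fin n) (t : Finset (Fin n)) :
    ∃ c : ℝ, c ≠ 0 ∧ egen Q a * eProd Q t = c • eProd Q (symmDiff {a} t) := by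
  by_cases h : a ∈ t
  · have ha : a ∈ t.sort (· ≤ ·) := (Finset.mem_sort _).mpr h
    have hperm : (t.sort (· ≤ ·)).Perm (a :: (t.sort (· ≤ ·)).erase a) :=
      List.perm_cons_erase ha
    obtain ⟨c, hc, he⟩ := eListProd_perm Q hQ hperm (Finset.sort_nodup _ _)
    have hperm2 : ((t.sort (· ≤ ·)).erase a).Perm ((t.erase a).sort (· ≤ ·)) := by
      rw [← Multiset.coe_eq_coe, ← Multiset.coe_erase, Finset.sort_eq,
        Finset.sort_eq, Finset.erase_val]
    obtain ⟨c₂, hc₂, he₂⟩ :=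
      eListProd_perm Q hQ hperm2 ((Finset.sort_nodup _ _).erase a)
    have hq : Q (Pi.single a 1) ≠ 0 := by
      rcases hQ.1 a with h1 | h1 <;> rw [h1] <;> norm_num
    refine ⟨c * Q (Pi.single a 1) * c₂, mul_ne_zero (mul_ne_zero hc hq) hc₂, ?_⟩
    rw [symmDiff_singleton_finset, if_pos h]
    calc egen Q a * eProd Q t
        = egen Q a * (c • eListProd Q (a :: (t.sort (· ≤ ·)).erase a)) := by
          rw [eProd_eq_sort, he]
      _ = c • (egen Q a * (egen Q a * eListProd Q ((t.sort (· ≤ ·)).erase a))) := by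
          rw [mul_smul_comm, eListProd_cons]
      _ = c • ((egen Q a * egen Q a) * eListProd Q ((t.sort (· ≤ ·)).erase a)) := by
          rw [mul_assoc]
      _ = c • (Q (Pi.single a 1) • eListProd Q ((t.sort (· ≤ ·)).erase a)) := by
          rw [egen_sq, ← Algebra.smul_def]
      _ = c • (Q (Pi.single a 1) • (c₂ • eListProd Q ((t.erase a).sort (· ≤ ·)))) := by
          rw [he₂]
      _ = (c * Q (Pi.single a 1) * c₂) • eProd Q (t.erase a) := by
          rw [eProd_eq_sort, smul_smul, smul_smul]
  · have ha : a ∉ t.sort (· ≤ ·) := fun hc => h ((Finset.mem_sort _).mp hc)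
    have hperm : (a :: t.sort (· ≤ ·)).Perm ((insert a t).sort (· ≤ ·)) := by
      rw [← Multiset.coe_eq_coe, ← Multiset.cons_coe, Finset.sort_eq, Finset.sort_eq,
        Finset.insert_val_of_notMem h]
    obtain ⟨c, hc, he⟩ :=
      eListProd_perm Q hQ hperm (List.nodup_cons.mpr ⟨ha, Finset.sort_nodup _ _⟩)
    refine ⟨c, hc, ?_⟩
    rw [symmDiff_singleton_finset, if_neg h, eProd_eq_sort, eProd_eq_sort,
      ← eListProd_cons, he]

lemma eListProd_mul_eProd (hQ : DiagQ Q) :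
    ∀ l : List (Fin n), l.Nodup → ∀ t : Finset (Fin n),
    ∃ c : ℝ, c ≠ 0 ∧ eListProd Q l * eProd Q t = c • eProd Q (symmDiff l.toFinset t) := by
  intro l
  induction l with
  | nil =>
      intro _ t
      refine ⟨1, one_ne_zero, ?_⟩
      rw [List.toFinset_nil, eListProd_nil, one_mul, one_smul]
      congr 1
      exact (bot_symmDiff t).symm
  | cons a l ih =>
      intro hl t
      have hal : a ∉ l.toFinset := by
        simpa using (List.nodup_cons.mp hl).1
      obtain ⟨c, hc, he⟩ := ih (List.Nodup.of_cons hl) t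
      obtain ⟨c₂, hc₂, he₂⟩ := egen_mul_eProd Q hQ a (symmDiff l.toFinset t)
      refine ⟨c₂ * c, mul_ne_zero hc₂ hc, ?_⟩
      have hsd : symmDiff (a :: l).toFinset t = symmDiff {a} (symmDiff l.toFinset t) := by
        rw [← symmDiff_assoc, symmDiff_singleton_finset, if_neg hal, List.toFinset_cons]
      rw [hsd, eListProd_cons, mul_assoc, he, mul_smul_comm, he₂, smul_smul,
        mul_comm c c₂]

lemma eProd_mul_eProd (hQ : DiagQ Q) (s t : Finset (Fin n)) :
    ∃ c : ℝ, c ≠ 0 ∧ eProd Q s * eProd Q t = c • eProd Q (symmDiff s t) := by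
  obtain ⟨c, hc, he⟩ :=
    eListProd_mul_eProd Q hQ (s.sort (· ≤ ·)) (Finset.sort_nodup _ _) t
  rw [Finset.sort_toFinset] at he
  exact ⟨c, hc, (eProd_eq_sort Q s) ▸ he⟩

@[simp] lemma eProd_empty : eProd Q (∅ : Finset (Fin n)) = 1 := by
  simp [eProd]

lemma omega_sq (hQ : DiagQ Q) :
    ∃ c : ℝ, c ≠ 0 ∧
      eProd Q Finset.univ * eProd Q Finset.univ = algebraMap ℝ _ c := by
  obtain ⟨c, hc, he⟩ := eProd_mul_eProd Q hQ Finset.univ Finset.univ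
  refine ⟨c, hc, ?_⟩
  rw [he, symmDiff_self]
  show c • eProd Q ∅ = _
  rw [eProd_empty, Algebra.algebraMap_eq_smul_one]

lemma mul_omega_mem (hQ : DiagQ Q) {j : ℕ} {x : CliffordAlgebra Q}
    (hx : x ∈ gradeSubmodule Q j) :
    x * eProd Q Finset.univ ∈ gradeSubmodule Q (n - j) := by
  induction hx using Submodule.span_induction with
  | mem x hx =>
      obtain ⟨s, hs, rfl⟩ := hx
      obtain ⟨c, hc, he⟩ := eProd_mul_eProd Q hQ s Finset.univ
      rw [he]
      refine Submodule.smul_mem _ _ (Submodule.subset_span ?_)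
      refine ⟨symmDiff s Finset.univ, ?_, rfl⟩
      have : symmDiff s Finset.univ = sᶜ := by
        rw [← Finset.top_eq_univ, symmDiff_top, hnot_eq_compl]
      rw [this, Finset.card_compl, Fintype.card_fin, hs]
  | zero => rw [zero_mul]; exact Submodule.zero_mem _
  | add x y _ _ hx hy => rw [add_mul]; exact Submodule.add_mem _ hx hy
  | smul c x _ hx => rw [smul_mul_assoc]; exact Submodule.smul_mem _ _ hx

lemma filter_ne_length {l : List (Fin n)} (hl : l.Nodup) {a : Fin n} (ha : a ∈ l) :
    (l.filter (· ≠ a)).length = l.length - 1 := by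
  have hperm : l.Perm (a :: l.erase a) := List.perm_cons_erase ha
  have h1 : (l.filter (· ≠ a)).length = ((a :: l.erase a).filter (· ≠ a)).length :=
    (hperm.filter _).length_eq
  have hna : a ∉ l.erase a := fun h => ((hl.mem_erase_iff).mp h).1 rfl
  have h2 : (a :: l.erase a).filter (· ≠ a) = l.erase a := by
    rw [List.filter_cons_of_neg (by simp)]
    exact List.filter_eq_self.mpr fun b hb => by
      simp only [decide_eq_true_eq]
      exact fun hba => hna (hba ▸ hb)
  rw [h1, h2, List.length_erase_of_mem ha]

lemma egen_omega (hQ : DiagQ Q) (a : Fin n) :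
    egen Q a * eProd Q Finset.univ
      = ((-1 : ℝ) ^ (n - 1)) • (eProd Q Finset.univ * egen Q a) := by
  have h := egen_pass Q hQ a ((Finset.univ : Finset (Fin n)).sort (· ≤ ·))
  have hlen : (((Finset.univ : Finset (Fin n)).sort (· ≤ ·)).filter (· ≠ a)).length
      = n - 1 := by
    rw [filter_ne_length (Finset.sort_nodup _ _)
      ((Finset.mem_sort _).mpr (Finset.mem_univ a)), Finset.length_sort,
      Finset.card_univ, Fintype.card_fin]
  rw [eProd_eq_sort, h, hlen]

lemma iota_omega (hQ : DiagQ Q) (m : Fin n → ℝ) :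
    ι Q m * eProd Q Finset.univ
      = ((-1 : ℝ) ^ (n - 1)) • (eProd Q Finset.univ * ι Q m) := by
  have hm : m = ∑ a : Fin n, m a • (Pi.single a 1 : Fin n → ℝ) := by
    funext b
    simp [Finset.sum_apply, Pi.single_apply]
  rw [hm, map_sum]
  · rw [Finset.sum_mul, Finset.mul_sum, Finset.smul_sum]
    refine Finset.sum_congr rfl fun a _ => ?_
    rw [map_smul]
    change (m a • egen Q a) * _ = _ • (_ * (m a • egen Q a))
    rw [smul_mul_assoc, egen_omega Q hQ a, mul_smul_comm, smul_comm]

lemma pair_omega (hQ : DiagQ Q) (m₁ m₂ : Fin n → ℝ) :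
    (ι Q m₁ * ι Q m₂) * eProd Q Finset.univ
      = eProd Q Finset.univ * (ι Q m₁ * ι Q m₂) := by
  rw [mul_assoc, iota_omega Q hQ m₂, mul_smul_comm, ← mul_assoc,
    iota_omega Q hQ m₁, smul_mul_assoc, smul_smul, ← pow_add]
  have : ((-1 : ℝ)) ^ (n - 1 + (n - 1)) = 1 := by
    rw [neg_one_pow_eq_one_iff_even (by norm_num : (-1 : ℝ) ≠ 1)]
    exact ⟨n - 1, rfl⟩
  rw [this, one_smul, mul_assoc]

lemma even_omega (hQ : DiagQ Q) (x : CliffordAlgebra Q) (hx : x ∈ evenOdd Q 0) :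
    x * eProd Q Finset.univ = eProd Q Finset.univ * x := by
  exact even_induction
    (motive := fun x _ => x * eProd Q Finset.univ = eProd Q Finset.univ * x)
    (algebraMap := fun r => by beta_reduce; rw [← Algebra.commutes])
    (add := fun x y hx hy ihx ihy => by
      beta_reduce; beta_reduce at ihx ihy; rw [add_mul, mul_add, ihx, ihy])
    (ι_mul_ι_mul := fun m₁ m₂ x hx ih => by
      beta_reduce; beta_reduce at ih
      rw [mul_assoc, ih, ← mul_assoc, pair_omega Q hQ, mul_assoc]) (x := x) (hx := hx)

lemma odd_omega (hQ : DiagQ Q) (x : CliffordAlgebra Q) (hx : x ∈ evenOdd Q 1) :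
    x * eProd Q Finset.univ
      = ((-1 : ℝ) ^ (n - 1)) • (eProd Q Finset.univ * x) := by
  exact odd_induction
    (P := fun x _ => x * eProd Q Finset.univ
      = ((-1 : ℝ) ^ (n - 1)) • (eProd Q Finset.univ * x))
    (ι := fun v => iota_omega Q hQ v)
    (add := fun x y hx hy ihx ihy => by
      beta_reduce; beta_reduce at ihx ihy; rw [add_mul, mul_add, ihx, ihy, smul_add])
    (ι_mul_ι_mul := fun m₁ m₂ x hx ih => by
      beta_reduce; beta_reduce at ih
      rw [mul_assoc, ih, mul_smul_comm, ← mul_assoc, pair_omega Q hQ,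
        mul_assoc]) (x := x) (hx := hx)

lemma Pset_omega (hQ : DiagQ Q) {T : CliffordAlgebra Q} (hT : T ∈ Pset Q) :
    ∃ ε : ℝ, ε ≠ 0 ∧
      T * eProd Q Finset.univ = ε • (eProd Q Finset.univ * T) := by
  obtain ⟨W, T₀, hW, _, hT₀, _, rfl⟩ := hT
  have hWc : ∀ g, g * W = W * g := fun g => (Subalgebra.mem_center_iff.mp hW g)
  rcases hT₀ with h0 | h1
  · refine ⟨1, one_ne_zero, ?_⟩
    rw [one_smul, mul_assoc, even_omega Q hQ T₀ h0, ← mul_assoc, ← hWc, mul_assoc]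
  · refine ⟨(-1 : ℝ) ^ (n - 1), pow_ne_zero _ (by norm_num), ?_⟩
    rw [mul_assoc, odd_omega Q hQ T₀ h1, mul_smul_comm, ← mul_assoc, ← hWc, mul_assoc]

lemma conj_key (hQ : DiagQ Q) {j : ℕ} (hj : j ≤ n) (T : (CliffordAlgebra Q)ˣ)
    (hT : (↑T : CliffordAlgebra Q) ∈ Pset Q)
    (H : ∀ U ∈ gradeSubmodule Q j,
      (↑T : CliffordAlgebra Q) * U * (↑T⁻¹ : CliffordAlgebra Q) ∈ gradeSubmodule Q j) :
    ∀ U ∈ gradeSubmodule Q (n - j),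
      (↑T : CliffordAlgebra Q) * U * (↑T⁻¹ : CliffordAlgebra Q)
        ∈ gradeSubmodule Q (n - j) := by
  intro U hU
  obtain ⟨c, hc, hcsq⟩ := omega_sq Q hQ
  obtain ⟨ε, hε, hTω⟩ := Pset_omega Q hQ hT
  set ω := eProd Q Finset.univ with hω
  have hV : (c⁻¹ • (U * ω)) ∈ gradeSubmodule Q j := by
    have h1 := mul_omega_mem Q hQ hU
    have hjj : n - (n - j) = j := by omega
    rw [hjj] at h1
    exact Submodule.smul_mem _ _ h1
  set V := c⁻¹ • (U * ω) with hVdef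
  have hUV : U = V * ω := by
    rw [hVdef, smul_mul_assoc, mul_assoc, hcsq, ← Algebra.commutes,
      ← Algebra.smul_def, smul_smul, inv_mul_cancel₀ hc, one_smul]
  have hTV := H V hV
  have hinv : (↑T⁻¹ : CliffordAlgebra Q) * ↑T = 1 := Units.inv_mul T
  have h1 : (↑T : CliffordAlgebra Q) * ω * ↑T⁻¹ = ε • ω := by
    rw [hTω, smul_mul_assoc, mul_assoc, Units.mul_inv, mul_one]
  have h2 : ((↑T : CliffordAlgebra Q) * V * ↑T⁻¹) * (↑T * ω * ↑T⁻¹)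
      = ↑T * (V * ω) * ↑T⁻¹ := by
    have e1 : ((↑T : CliffordAlgebra Q) * V * ↑T⁻¹) * (↑T * ω * ↑T⁻¹)
        = ↑T * (V * ((↑T⁻¹ * ↑T) * (ω * ↑T⁻¹))) := by
      simp only [mul_assoc]
    rw [e1, hinv, one_mul]
    simp only [mul_assoc]
  have key : (↑T : CliffordAlgebra Q) * U * ↑T⁻¹
      = ε • (((↑T : CliffordAlgebra Q) * V * ↑T⁻¹) * ω) := by
    rw [hUV, ← h2, h1, mul_smul_comm]
  rw [key]
  exact Submodule.smul_mem _ _ (mul_omega_mem Q hQ hTV)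

/-- `Γ^k = Γ^{n-k}` for `1 ≤ k ≤ n - 1`. -/
theorem stmt15 (hQ : DiagQ Q) (k : ℕ) (hk : 1 ≤ k) (hk' : k ≤ n - 1)
    (T : (CliffordAlgebra Q)ˣ) (hT : (↑T : CliffordAlgebra Q) ∈ Pset Q) :
    (∀ U ∈ gradeSubmodule Q k,
        (↑T : CliffordAlgebra Q) * U * (↑T⁻¹ : CliffordAlgebra Q) ∈ gradeSubmodule Q k) ↔
      (∀ U ∈ gradeSubmodule Q (n - k),
        (↑T : CliffordAlgebra Q) * U * (↑T⁻¹ : CliffordAlgebra Q) ∈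
          gradeSubmodule Q (n - k)) := by
  have hkn : k ≤ n := by omega
  constructor
  · intro H
    exact conj_key Q hQ hkn T hT H
  · intro H
    have h := conj_key Q hQ (Nat.sub_le n k) T hT H
    rwa [show n - (n - k) = k by omega] at h
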